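/- Let k be a field, u an element of a complete non-archimedean valued field extension with 0 < |u| < 1, and g = Σ_{i=0}^∞ g_i u^i ∈ K^{♭,°}⟨X_1,...,X_N⟩ with g_i ∈ k[X_1,...,X_N] (viewing k inside the valuation ring). Then there exists ε > 0, depending only on g, such that for every x ∈ k^N either g(x) = 0 or |g(x)| > ε. -/

import Mathlib

/-- let `g = Σ_i g_i u^i` with `g_i ∈ k[X_1,...,X_N]` (the residue field `k`
embedded in the valuation ring of `K`, so nonzero elements of `k` have norm `1`) and
`0 < ‖u‖ < 1`. Then there is `ε > 0`, depending only on `g`, so that for every `x ∈ k^N`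
either `g(x) = 0` or `‖g(x)‖ > ε`. -/
theorem statement10 {K : Type*} [NontriviallyNormedField K] [IsUltrametricDist K]
    [CompleteSpace K]
    {k : Type*} [Field k] (ι : k →+* K) (hι : ∀ a : k, a ≠ 0 → ‖ι a‖ = 1)
    {N : ℕ} (u : K) (hu0 : 0 < ‖u‖) (hu1 : ‖u‖ < 1)
    (g : ℕ → MvPolynomial (Fin N) k) :
    ∃ ε > (0 : ℝ), ∀ x : Fin N → k,
      (∑' i : ℕ, ι (MvPolynomial.eval x (g i)) * u ^ i) = 0 ∨
      ε < ‖∑' i : ℕ, ι (MvPolynomial.eval x (g i)) * u ^ i‖ := by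
  -- the increasing chain of ideals generated by the g_i stabilizes
  have hmono : Monotone fun M : ℕ => Ideal.span (g '' Set.Iic M) := by
    intro a b hab
    exact Ideal.span_mono (Set.image_mono (Set.Iic_subset_Iic.mpr hab))
  obtain ⟨M, hM⟩ :=
    monotone_stabilizes_iff_noetherian.mpr (inferInstance : IsNoetherian (MvPolynomial (Fin N) k) (MvPolynomial (Fin N) k))
      ⟨fun M : ℕ => Ideal.span (g '' Set.Iic M), hmono⟩
  -- key: if g_i(x) = 0 for all i ≤ M, then g_n(x) = 0 for all n
  have key : ∀ x : Fin N → k, (∀ i ≤ M, MvPolynomial.eval x (g i) = 0) →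
      ∀ n, MvPolynomial.eval x (g n) = 0 := by
    intro x hx n
    have h1 : g n ∈ Ideal.span (g '' Set.Iic (max n M)) :=
      Ideal.subset_span ⟨n, Set.mem_Iic.mpr (le_max_left _ _), rfl⟩
    have h2 : Ideal.span (g '' Set.Iic (max n M)) = Ideal.span (g '' Set.Iic M) :=
      (hM (max n M) (le_max_right _ _)).symm
    rw [h2] at h1
    have h3 : Ideal.span (g '' Set.Iic M) ≤ RingHom.ker (MvPolynomial.eval x) := by
      rw [Ideal.span_le]
      rintro y ⟨i, hi, rfl⟩
      exact hx i hi
    exact h3 h1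
  refine ⟨‖u‖ ^ (M + 1), pow_pos hu0 _, fun x => ?_⟩
  set f : ℕ → K := fun i => ι (MvPolynomial.eval x (g i)) * u ^ i with hf
  have hnorm : ∀ i, ‖f i‖ ≤ ‖u‖ ^ i := by
    intro i
    rw [hf]
    simp only [norm_mul, norm_pow]
    by_cases h : MvPolynomial.eval x (g i) = 0
    · simp [h, pow_nonneg hu0.le]
    · rw [hι _ h, one_mul]
  have hsum : Summable f :=
    Summable.of_norm_bounded (summable_geometric_of_lt_one hu0.le hu1) hnorm
  by_cases hz : ∀ i ≤ M, MvPolynomial.eval x (g i) = 0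
  · left
    have hz0 : ∀ i, ι (MvPolynomial.eval x (g i)) * u ^ i = 0 := by
      intro i
      rw [key x hz i, map_zero, zero_mul]
    have hz0' : ∀ i, f i = 0 := hz0
    calc (∑' i : ℕ, ι (MvPolynomial.eval x (g i)) * u ^ i) = ∑' i : ℕ, (0 : K) :=
          tsum_congr hz0'
      _ = 0 := tsum_zero
  · right
    push_neg at hz
    classical
    -- least index j ≤ M with g_j(x) ≠ 0
    have hex : ∃ j, MvPolynomial.eval x (g j) ≠ 0 := ⟨hz.choose, hz.choose_spec.2⟩
    set j := Nat.find hex with hj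
    have hjne : MvPolynomial.eval x (g j) ≠ 0 := Nat.find_spec hex
    have hjM : j ≤ M := Nat.find_min' hex hz.choose_spec.2 |>.trans hz.choose_spec.1
    have hjmin : ∀ i < j, MvPolynomial.eval x (g i) = 0 := fun i hi => by
      by_contra h; exact absurd (Nat.find_min' hex h) (not_le.mpr hi)
    -- split the sum
    have hsplit := Summable.sum_add_tsum_nat_add (f := f) (j + 1) hsum
    have hfin : ∑ i ∈ Finset.range (j + 1), f i = f j := by
      rw [Finset.sum_range_succ]
      have : ∀ i ∈ Finset.range j, f i = 0 := by
        intro i hi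
        simp [hf, hjmin i (Finset.mem_range.mp hi)]
      rw [Finset.sum_eq_zero this, zero_add]
    have htail : ‖∑' i, f (i + (j + 1))‖ ≤ ‖u‖ ^ (j + 1) := by
      apply IsUltrametricDist.norm_tsum_le_of_forall_le_of_nonneg
        (pow_nonneg hu0.le _)
      intro i
      calc ‖f (i + (j + 1))‖ ≤ ‖u‖ ^ (i + (j + 1)) := hnorm _
        _ ≤ ‖u‖ ^ (j + 1) := pow_le_pow_of_le_one hu0.le hu1.le (by omega)
    have hfj : ‖f j‖ = ‖u‖ ^ j := by
      rw [hf]; simp only [norm_mul, norm_pow, hι _ hjne, one_mul]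
    have htaillt : ‖∑' i, f (i + (j + 1))‖ < ‖f j‖ := by
      rw [hfj]
      refine htail.trans_lt ?_
      calc ‖u‖ ^ (j + 1) = ‖u‖ ^ j * ‖u‖ := by ring
        _ < ‖u‖ ^ j * 1 := by
            exact mul_lt_mul_of_pos_left hu1 (pow_pos hu0 _)
        _ = ‖u‖ ^ j := mul_one _
    have hne : ‖f j‖ ≠ ‖∑' i, f (i + (j + 1))‖ := htaillt.ne'
    have hres : ‖∑' i, f i‖ = ‖u‖ ^ j := by
      rw [← hsplit, hfin, IsUltrametricDist.norm_add_eq_max_of_norm_ne_norm hne,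
        max_eq_left htaillt.le, hfj]
    rw [show (∑' i, ι (MvPolynomial.eval x (g i)) * u ^ i) = ∑' i, f i from rfl, hres]
    exact pow_lt_pow_right_of_lt_one₀ hu0 hu1 (by omega)
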